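/- Suppose the real circulant matrix C and the real skew-circulant matrix S from the CSCS splitting T = C + S are both positive definite. Then for any θ > 0, both θI + C and θI + S are invertible, and the CSCS iteration matrix M(θ) = (θI + S)^{-1}(θI − C)(θI + C)^{-1}(θI − S) has spectral radius strictly less than 1. -/

import Mathlib

open Matrix

/-- A real matrix is circulant: its `(j,k)` entry depends only on `j - k` mod `n`. -/
def IsCirculantR (n : ℕ) (M : Matrix (Fin n) (Fin n) ℝ) : Prop :=
  ∃ v : ℕ → ℝ, ∀ j k : Fin n,
    M j k = if (k.1 : ℕ) ≤ j.1 then v (j.1 - k.1) else v (n - (k.1 - j.1))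

/-- A real matrix is skew-circulant: `s_{jk} = s_{j-k}` with `s_{-k} = -s_{n-k}`. -/
def IsSkewCirculantR (n : ℕ) (M : Matrix (Fin n) (Fin n) ℝ) : Prop :=
  ∃ v : ℕ → ℝ, ∀ j k : Fin n,
    M j k = if (k.1 : ℕ) ≤ j.1 then v (j.1 - k.1) else -v (n - (k.1 - j.1))

namespace CSCSAux

/-- squared Euclidean norm of a complex vector -/
noncomputable def fsq {n : ℕ} (x : Fin n → ℂ) : ℝ := ∑ i, Complex.normSq (x i)

lemma fsq_nonneg {n : ℕ} (x : Fin n → ℂ) : 0 ≤ fsq x :=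
  Finset.sum_nonneg fun _ _ => Complex.normSq_nonneg _

lemma fsq_pos {n : ℕ} {x : Fin n → ℂ} (hx : x ≠ 0) : 0 < fsq x := by
  obtain ⟨i, hi⟩ : ∃ i, x i ≠ 0 := by
    by_contra h; push_neg at h; exact hx (funext h)
  exact Finset.sum_pos' (fun _ _ => Complex.normSq_nonneg _)
    ⟨i, Finset.mem_univ i, by simpa using Complex.normSq_pos.mpr hi⟩

lemma fsq_zero {n : ℕ} : fsq (0 : Fin n → ℂ) = 0 := by simp [fsq]

lemma ne_zero_of_fsq_pos {n : ℕ} {x : Fin n → ℂ} (h : 0 < fsq x) : x ≠ 0 := by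
  rintro rfl; simp [fsq_zero] at h

lemma fsq_smul {n : ℕ} (μ : ℂ) (x : Fin n → ℂ) : fsq (μ • x) = ‖μ‖ ^ 2 * fsq x := by
  have h : Complex.normSq μ = ‖μ‖ ^ 2 := by
    rw [Complex.normSq_eq_norm_sq]
  rw [← h, fsq, fsq, Finset.mul_sum]
  simp [Complex.normSq_mul]

/-- the complexified matrix -/
noncomputable def cm {n : ℕ} : Matrix (Fin n) (Fin n) ℝ →+* Matrix (Fin n) (Fin n) ℂ :=
  RingHom.mapMatrix Complex.ofRealHom

lemma cm_apply {n : ℕ} (A : Matrix (Fin n) (Fin n) ℝ) :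
    (cm A) = A.map (fun x => (x : ℂ)) := rfl

lemma mulVec_re {n : ℕ} (A : Matrix (Fin n) (Fin n) ℝ) (y : Fin n → ℂ) (i : Fin n) :
    ((cm A).mulVec y i).re = A.mulVec (fun j => (y j).re) i := by
  simp [cm_apply, mulVec, dotProduct, Complex.re_sum, Matrix.map_apply,
    Complex.re_ofReal_mul]

lemma mulVec_im {n : ℕ} (A : Matrix (Fin n) (Fin n) ℝ) (y : Fin n → ℂ) (i : Fin n) :
    ((cm A).mulVec y i).im = A.mulVec (fun j => (y j).im) i := by
  simp [cm_apply, mulVec, dotProduct, Complex.im_sum, Matrix.map_apply,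
    Complex.im_ofReal_mul]

lemma quad_nonneg {n : ℕ} {A : Matrix (Fin n) (Fin n) ℝ}
    (hA : ∀ x : Fin n → ℝ, x ≠ 0 → 0 < x ⬝ᵥ A.mulVec x) (x : Fin n → ℝ) :
    0 ≤ x ⬝ᵥ A.mulVec x := by
  rcases eq_or_ne x 0 with rfl | hx
  · simp
  · exact (hA x hx).le

lemma mulVec_smul_one_add {n : ℕ} (θ : ℂ) (A : Matrix (Fin n) (Fin n) ℂ)
    (y : Fin n → ℂ) (i : Fin n) :
    (θ • (1 : Matrix (Fin n) (Fin n) ℂ) + A).mulVec y i = θ * y i + A.mulVec y i := by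
  rw [add_mulVec, smul_mulVec, one_mulVec]; simp

lemma mulVec_smul_one_sub {n : ℕ} (θ : ℂ) (A : Matrix (Fin n) (Fin n) ℂ)
    (y : Fin n → ℂ) (i : Fin n) :
    (θ • (1 : Matrix (Fin n) (Fin n) ℂ) - A).mulVec y i = θ * y i - A.mulVec y i := by
  rw [sub_mulVec, smul_mulVec, one_mulVec]; simp

/-- Key strict Cayley-contraction inequality. -/
lemma key {n : ℕ} {A : Matrix (Fin n) (Fin n) ℝ}
    (hA : ∀ x : Fin n → ℝ, x ≠ 0 → 0 < x ⬝ᵥ A.mulVec x)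
    {θ : ℝ} (hθ : 0 < θ) {y : Fin n → ℂ} (hy : y ≠ 0) :
    fsq (((θ : ℂ) • (1 : Matrix (Fin n) (Fin n) ℂ) - cm A).mulVec y) <
      fsq (((θ : ℂ) • (1 : Matrix (Fin n) (Fin n) ℂ) + cm A).mulVec y) := by
  set a : Fin n → ℝ := fun j => (y j).re with ha
  set b : Fin n → ℝ := fun j => (y j).im with hb
  have hdiff : fsq (((θ : ℂ) • (1 : Matrix (Fin n) (Fin n) ℂ) + cm A).mulVec y)
      - fsq (((θ : ℂ) • (1 : Matrix (Fin n) (Fin n) ℂ) - cm A).mulVec y)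
      = 4 * θ * (a ⬝ᵥ A.mulVec a + b ⬝ᵥ A.mulVec b) := by
    rw [fsq, fsq, ← Finset.sum_sub_distrib, dotProduct, dotProduct, mul_add,
      Finset.mul_sum, Finset.mul_sum, ← Finset.sum_add_distrib]
    refine Finset.sum_congr rfl fun i _ => ?_
    rw [mulVec_smul_one_add, mulVec_smul_one_sub]
    have hre := mulVec_re A y i
    have him := mulVec_im A y i
    simp only [Complex.normSq_apply, Complex.add_re, Complex.add_im, Complex.sub_re,
      Complex.sub_im, Complex.re_ofReal_mul, Complex.im_ofReal_mul, hre, him]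
    ring
  have hab : a ≠ 0 ∨ b ≠ 0 := by
    by_contra h
    push_neg at h
    obtain ⟨h1, h2⟩ := h
    apply hy
    funext j
    have e1 : (y j).re = 0 := congrFun h1 j
    have e2 : (y j).im = 0 := congrFun h2 j
    exact Complex.ext e1 e2
  have hpos : 0 < a ⬝ᵥ A.mulVec a + b ⬝ᵥ A.mulVec b := by
    rcases hab with h | h
    · have := hA a h
      have := quad_nonneg hA b
      linarith
    · have := hA b h
      have := quad_nonneg hA a
      linarith
  nlinarith

/-- Over ℂ, `θI + A` is invertible. -/
lemma unitC {n : ℕ} {A : Matrix (Fin n) (Fin n) ℝ}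
    (hA : ∀ x : Fin n → ℝ, x ≠ 0 → 0 < x ⬝ᵥ A.mulVec x)
    {θ : ℝ} (hθ : 0 < θ) :
    IsUnit ((θ : ℂ) • (1 : Matrix (Fin n) (Fin n) ℂ) + cm A) := by
  rw [Matrix.isUnit_iff_isUnit_det, isUnit_iff_ne_zero]
  intro hdet
  obtain ⟨v, hv0, hv⟩ := (Matrix.exists_mulVec_eq_zero_iff).mpr hdet
  have h1 := key hA hθ hv0
  rw [hv, fsq_zero] at h1
  have h2 := fsq_nonneg (((θ : ℂ) • (1 : Matrix (Fin n) (Fin n) ℂ) - cm A).mulVec v)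
  linarith

/-- Over ℝ, `θI + A` is invertible. -/
lemma unitR {n : ℕ} {A : Matrix (Fin n) (Fin n) ℝ}
    (hA : ∀ x : Fin n → ℝ, x ≠ 0 → 0 < x ⬝ᵥ A.mulVec x)
    {θ : ℝ} (hθ : 0 < θ) :
    IsUnit (θ • (1 : Matrix (Fin n) (Fin n) ℝ) + A) := by
  rw [Matrix.isUnit_iff_isUnit_det, isUnit_iff_ne_zero]
  intro hdet
  obtain ⟨v, hv0, hv⟩ := (Matrix.exists_mulVec_eq_zero_iff).mpr hdet
  have h1 : v ⬝ᵥ (θ • (1 : Matrix (Fin n) (Fin n) ℝ) + A).mulVec v = 0 := by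
    rw [hv]; simp
  have h2 : v ⬝ᵥ (θ • (1 : Matrix (Fin n) (Fin n) ℝ) + A).mulVec v
      = θ * (v ⬝ᵥ v) + v ⬝ᵥ A.mulVec v := by
    rw [add_mulVec, smul_mulVec, one_mulVec, dotProduct_add, dotProduct_smul]
    simp [smul_eq_mul]
  have h3 : 0 < v ⬝ᵥ v := by
    have : v ⬝ᵥ v = ∑ i, v i * v i := rfl
    obtain ⟨i, hi⟩ : ∃ i, v i ≠ 0 := by
      by_contra h; push_neg at h; exact hv0 (funext h)
    rw [this]
    exact Finset.sum_pos' (fun j _ => mul_self_nonneg _)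
      ⟨i, Finset.mem_univ i, mul_self_pos.mpr hi⟩
  have h4 := hA v hv0
  nlinarith

lemma cm_inv {n : ℕ} {A : Matrix (Fin n) (Fin n) ℝ} (h : IsUnit A) :
    cm A⁻¹ = (cm A)⁻¹ := by
  have h1 : cm A⁻¹ * cm A = 1 := by
    rw [← _root_.map_mul, Matrix.nonsing_inv_mul A ((Matrix.isUnit_iff_isUnit_det A).mp h)]
    exact cm.map_one
  exact (Matrix.inv_eq_left_inv h1).symm

lemma cm_smul_one {n : ℕ} (θ : ℝ) :
    cm (θ • (1 : Matrix (Fin n) (Fin n) ℝ)) = (θ : ℂ) • (1 : Matrix (Fin n) (Fin n) ℂ) := by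
  ext i j
  by_cases h : i = j <;>
    simp [cm_apply, Matrix.map_apply, Matrix.smul_apply, Matrix.one_apply, h]

end CSCSAux

open CSCSAux in
/-- If in the CSCS splitting `T = C + S` both the circulant part `C`
and the skew-circulant part `S` are positive definite (i.e. `xᵀ C x > 0` and `xᵀ S x > 0`
for all `x ≠ 0`), then for any `θ > 0` the matrices `θI + C` and `θI + S` are invertible
and the CSCS iteration matrix `M(θ) = (θI+S)⁻¹ (θI−C) (θI+C)⁻¹ (θI−S)` has spectral
radius strictly less than `1`: every eigenvalue `μ ∈ spectrum ℂ` of `M(θ)` has `‖μ‖ < 1`. -/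
theorem cscs_iteration_converges (n : ℕ) (hn : 0 < n)
    (C S : Matrix (Fin n) (Fin n) ℝ)
    (hC : IsCirculantR n C) (hS : IsSkewCirculantR n S)
    (hCpd : ∀ x : Fin n → ℝ, x ≠ 0 → 0 < x ⬝ᵥ C.mulVec x)
    (hSpd : ∀ x : Fin n → ℝ, x ≠ 0 → 0 < x ⬝ᵥ S.mulVec x)
    (θ : ℝ) (hθ : 0 < θ) :
    IsUnit (θ • (1 : Matrix (Fin n) (Fin n) ℝ) + C) ∧
      IsUnit (θ • (1 : Matrix (Fin n) (Fin n) ℝ) + S) ∧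
      ∀ μ ∈ spectrum ℂ
          ((((θ • (1 : Matrix (Fin n) (Fin n) ℝ) + S)⁻¹ *
              (θ • (1 : Matrix (Fin n) (Fin n) ℝ) - C) *
              (θ • (1 : Matrix (Fin n) (Fin n) ℝ) + C)⁻¹ *
              (θ • (1 : Matrix (Fin n) (Fin n) ℝ) - S)).map (fun x => (x : ℂ)))),
        ‖μ‖ < 1 := by
  have hCu := unitR hCpd hθ (A := C)
  have hSu := unitR hSpd hθ (A := S)
  refine ⟨hCu, hSu, ?_⟩
  intro μ hμ
  -- complexified matrices
  set P : Matrix (Fin n) (Fin n) ℂ := (θ : ℂ) • 1 + cm C with hP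
  set Pm : Matrix (Fin n) (Fin n) ℂ := (θ : ℂ) • 1 - cm C with hPm
  set Q : Matrix (Fin n) (Fin n) ℂ := (θ : ℂ) • 1 + cm S with hQ
  set Qm : Matrix (Fin n) (Fin n) ℂ := (θ : ℂ) • 1 - cm S with hQm
  have hPu : IsUnit P := unitC hCpd hθ
  have hQu : IsUnit Q := unitC hSpd hθ
  -- the complexified iteration matrix
  have hMc : (((θ • (1 : Matrix (Fin n) (Fin n) ℝ) + S)⁻¹ *
      (θ • (1 : Matrix (Fin n) (Fin n) ℝ) - C) *
      (θ • (1 : Matrix (Fin n) (Fin n) ℝ) + C)⁻¹ *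
      (θ • (1 : Matrix (Fin n) (Fin n) ℝ) - S)).map (fun x => (x : ℂ)))
      = Q⁻¹ * Pm * P⁻¹ * Qm := by
    rw [← cm_apply, _root_.map_mul, _root_.map_mul, _root_.map_mul, cm_inv hSu, cm_inv hCu,
      map_sub, map_sub, map_add, map_add, cm_smul_one]
  rw [hMc] at hμ
  rw [spectrum.mem_iff, Algebra.algebraMap_eq_smul_one] at hμ
  have hdet : (μ • (1 : Matrix (Fin n) (Fin n) ℂ) - Q⁻¹ * Pm * P⁻¹ * Qm).det = 0 := by
    by_contra h
    exact hμ ((Matrix.isUnit_iff_isUnit_det _).mpr (isUnit_iff_ne_zero.mpr h))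
  obtain ⟨x, hx0, hx⟩ := (Matrix.exists_mulVec_eq_zero_iff).mpr hdet
  have hMx : (Q⁻¹ * Pm * P⁻¹ * Qm).mulVec x = μ • x := by
    have := hx
    rw [sub_mulVec, smul_mulVec, one_mulVec, sub_eq_zero] at this
    exact this.symm
  -- set y
  set y : Fin n → ℂ := (P⁻¹ * Qm).mulVec x with hy
  have hQQ : Q * Q⁻¹ = 1 := Matrix.mul_nonsing_inv Q ((Matrix.isUnit_iff_isUnit_det Q).mp hQu)
  have hPP : P * P⁻¹ = 1 := Matrix.mul_nonsing_inv P ((Matrix.isUnit_iff_isUnit_det P).mp hPu)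
  have hPy : P.mulVec y = Qm.mulVec x := by
    rw [hy, mulVec_mulVec, ← mul_assoc, hPP, one_mul]
  have hPmy : Pm.mulVec y = μ • Q.mulVec x := by
    have h1 : Q.mulVec ((Q⁻¹ * Pm * P⁻¹ * Qm).mulVec x) = Q.mulVec (μ • x) := by rw [hMx]
    rw [mulVec_mulVec, ← mul_assoc, ← mul_assoc, ← mul_assoc, hQQ, one_mul,
      mul_assoc, Matrix.mulVec_smul] at h1
    rw [hy, mulVec_mulVec]
    exact h1
  rcases eq_or_ne μ 0 with rfl | hμ0
  · simp
  -- main chain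
  have hQx0 : Q.mulVec x ≠ 0 := by
    apply ne_zero_of_fsq_pos
    have h1 := key hSpd hθ hx0
    have h2 := fsq_nonneg (Qm.mulVec x)
    rw [← hQm, ← hQ] at h1
    linarith
  have hQmx0 : Qm.mulVec x ≠ 0 := by
    intro h
    have hy0 : y = 0 := by
      by_contra hyne
      have h1 := key hCpd hθ hyne
      rw [← hP, ← hPm, hPy, h, fsq_zero] at h1
      have h2 := fsq_nonneg (Pm.mulVec y)
      linarith
    have : Pm.mulVec y = 0 := by rw [hy0]; simp
    rw [hPmy] at this
    have : Q.mulVec x = 0 := by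
      rcases smul_eq_zero.mp this with h' | h'
      · exact absurd h' hμ0
      · exact h'
    exact hQx0 this
  have hy0 : y ≠ 0 := by
    intro h
    apply hQmx0
    rw [← hPy, h]; simp
  have h1 : fsq (Pm.mulVec y) < fsq (P.mulVec y) := by
    have := key hCpd hθ hy0
    rwa [← hP, ← hPm] at this
  have h2 : fsq (Qm.mulVec x) < fsq (Q.mulVec x) := by
    have := key hSpd hθ hx0
    rwa [← hQ, ← hQm] at this
  rw [hPy] at h1
  rw [hPmy, fsq_smul] at h1
  have h3 : ‖μ‖ ^ 2 * fsq (Q.mulVec x) < 1 * fsq (Q.mulVec x) := by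
    rw [one_mul]; linarith
  have h4 : 0 < fsq (Q.mulVec x) := fsq_pos hQx0
  have h5 : ‖μ‖ ^ 2 < 1 := lt_of_mul_lt_mul_right (by linarith) h4.le
  nlinarith [norm_nonneg μ]
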